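/- arXiv:1705.04360 — 6 statements merged into one kernel-verified Lean document; each statement's English description precedes it below -/
import Mathlib

section
/- Let F be a field of characteristic not 2 and q a nondegenerate quadratic form over F. If q is a group form (i.e. D_F(q) is a subgroup of F×), then H_F(q) = D_F(q), where H_F(q) = {a ∈ F× : q ⊥ (-a)q is isotropic}. -/
open QuadraticMap

/-- `DSet F q` is the set of nonzero values of `F` represented by the quadratic form `q`. -/
def DSet (F : Type*) [Field F] {V : Type*} [AddCommGroup V] [Module F V]
    (q : QuadraticForm F V) : Set F :=
  {a : F | a ≠ 0 ∧ ∃ v : V, q v = a}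

/-- `HSet F q` is the set of `a ∈ F×` such that `q ⊥ (-a)q` (i.e. `⟨1,-a⟩ ⊗ q`) is isotropic. -/
def HSet (F : Type*) [Field F] {V : Type*} [AddCommGroup V] [Module F V]
    (q : QuadraticForm F V) : Set F :=
  {a : F | a ≠ 0 ∧ ¬ (QuadraticMap.prod q ((-a) • q)).Anisotropic}

/-- `GSet F q` is the group of similarity factors of `q`: those `a ∈ F×` with `aq ≅ q`. -/
def GSet (F : Type*) [Field F] {V : Type*} [AddCommGroup V] [Module F V]
    (q : QuadraticForm F V) : Set F :=
  {a : F | a ≠ 0 ∧ QuadraticMap.Equivalent (a • q) q}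

/-- `q` is a group form if its set of nonzero represented values is a subgroup of `F×`. -/
def IsGroupForm (F : Type*) [Field F] {V : Type*} [AddCommGroup V] [Module F V]
    (q : QuadraticForm F V) : Prop :=
  (1 : F) ∈ DSet F q ∧ (∀ a ∈ DSet F q, ∀ b ∈ DSet F q, a * b ∈ DSet F q) ∧
    ∀ a ∈ DSet F q, a⁻¹ ∈ DSet F q

/-- `q` is round if its value set coincides with its group of similarity factors. -/
def IsRound (F : Type*) [Field F] {V : Type*} [AddCommGroup V] [Module F V]
    (q : QuadraticForm F V) : Prop :=
  DSet F q = GSet F q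

/-- Nondegeneracy of a quadratic form, via its polar form. -/
def NondegQF (F : Type*) [Field F] {V : Type*} [AddCommGroup V] [Module F V]
    (q : QuadraticForm F V) : Prop :=
  ∀ v : V, (∀ w : V, polar q v w = 0) → v = 0

lemma universal_of_isotropic
    {F : Type*} [Field F]
    {V : Type*} [AddCommGroup V] [Module F V]
    (q : QuadraticForm F V) (hq : ∀ v : V, (∀ w : V, polar q v w = 0) → v = 0)
    {x : V} (hx : x ≠ 0) (hx0 : q x = 0) (a : F) : ∃ v : V, q v = a := by
  have : ¬ ∀ w : V, polar q x w = 0 := fun h => hx (hq x h)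
  push_neg at this
  obtain ⟨u, hu⟩ := this
  set c := polar q x u with hc
  refine ⟨((a - q u) * c⁻¹) • x + u, ?_⟩
  rw [QuadraticMap.map_add ⇑q, QuadraticMap.map_smul, polar_smul_left, hx0, ← hc]
  simp only [smul_eq_mul, mul_zero, zero_add]
  field_simp
  ring

theorem HSet_eq_DSet_of_group_form
    (F : Type*) [Field F] (hF : (2 : F) ≠ 0)
    {V : Type*} [AddCommGroup V] [Module F V] [FiniteDimensional F V]
    (q : QuadraticForm F V) (hq : NondegQF F q) (hpos : 0 < Module.finrank F V)
    (hgroup : IsGroupForm F q) :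
    HSet F q = DSet F q := by
  obtain ⟨h1, hmul, hinv⟩ := hgroup
  ext a
  simp only [HSet, DSet, Set.mem_setOf_eq]
  constructor
  · rintro ⟨ha, hiso⟩
    refine ⟨ha, ?_⟩
    rw [QuadraticMap.Anisotropic] at hiso
    push_neg at hiso
    obtain ⟨⟨v, w⟩, hvw, hne⟩ := hiso
    have heval : q v + (-a) * q w = 0 := by
      simpa [QuadraticMap.prod_apply, QuadraticMap.smul_apply, smul_eq_mul] using hvw
    by_cases hw : q w = 0
    · have hv : q v = 0 := by rw [hw] at heval; simpa using heval
      have : ∃ x : V, x ≠ 0 ∧ q x = 0 := by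
        by_cases hv0 : v = 0
        · refine ⟨w, ?_, hw⟩
          intro h; exact hne (by simp [Prod.ext_iff, hv0, h])
        · exact ⟨v, hv0, hv⟩
      obtain ⟨x, hx, hx0⟩ := this
      exact universal_of_isotropic q hq hx hx0 a
    · have hqv : q v = a * q w := by linear_combination heval
      have hqv0 : q v ≠ 0 := by
        rw [hqv]; exact mul_ne_zero ha hw
      have hD1 : q v ∈ DSet F q := ⟨hqv0, v, rfl⟩
      have hD2 : (q w)⁻¹ ∈ DSet F q := hinv _ ⟨hw, w, rfl⟩
      have := hmul _ hD1 _ hD2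
      have ha' : a = q v * (q w)⁻¹ := by
        rw [hqv]; field_simp
      rw [ha'] ; exact this.2
  · rintro ⟨ha, v, hv⟩
    refine ⟨ha, ?_⟩
    obtain ⟨-, w, hw⟩ := h1
    intro haniso
    have : (QuadraticMap.prod q ((-a) • q)) (v, w) = 0 := by
      simp [QuadraticMap.prod_apply, QuadraticMap.smul_apply, smul_eq_mul, hv, hw]
    have := haniso _ this
    have hw0 : w ≠ 0 := by intro h; rw [h] at hw; simp at hw
    exact hw0 (congrArg Prod.snd this)
end

section
/- Let F be a field of characteristic not 2 and q a nondegenerate quadratic form over F representing 1. Then q is round (D_F(q) = G_F(q)) if and only if H_F(q) ⊆ G_F(q), where G_F(q) = {a ∈ F× : aq ≅ q} and H_F(q) = {a ∈ F× : q ⊥ (-a)q is isotropic}. -/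
open QuadraticMap

section Aux

variable {F : Type*} [Field F] {V : Type*} [AddCommGroup V] [Module F V]

/-- Scaling preserves equivalence. -/
lemma equiv_smul {q q' : QuadraticForm F V} (c : F)
    (h : QuadraticMap.Equivalent q q') :
    QuadraticMap.Equivalent (c • q) (c • q') := by
  obtain ⟨f⟩ := h
  exact ⟨{ f.toLinearEquiv with
      map_app' := fun m => by
        have := f.map_app m
        simp only [QuadraticMap.smul_apply]
        rw [← this]; rfl }⟩

/-- GSet is closed under multiplication. -/
lemma GSet_mul {q : QuadraticForm F V} {a b : F}
    (ha : a ∈ GSet F q) (hb : b ∈ GSet F q) : a * b ∈ GSet F q := by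
  refine ⟨mul_ne_zero ha.1 hb.1, ?_⟩
  have h1 : QuadraticMap.Equivalent (a • (b • q)) (a • q) := equiv_smul a hb.2
  have h2 : (a * b) • q = a • (b • q) := (smul_smul a b q).symm
  rw [h2]
  exact h1.trans ha.2

/-- GSet is closed under inverse. -/
lemma GSet_inv {q : QuadraticForm F V} {a : F}
    (ha : a ∈ GSet F q) : a⁻¹ ∈ GSet F q := by
  refine ⟨inv_ne_zero ha.1, ?_⟩
  have h1 : QuadraticMap.Equivalent (a⁻¹ • (a • q)) (a⁻¹ • q) := equiv_smul a⁻¹ ha.2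
  have h2 : a⁻¹ • (a • q) = q := by
    rw [smul_smul, inv_mul_cancel₀ ha.1, one_smul]
  rw [h2] at h1
  exact h1.symm

/-- A nondegenerate isotropic quadratic form is universal. -/
lemma universal_of_isotropic_s3 {q : QuadraticForm F V} (hq : NondegQF F q)
    {u : V} (hu : u ≠ 0) (hqu : q u = 0) (c : F) : ∃ w : V, q w = c := by
  obtain ⟨w, hw⟩ : ∃ w, polar q u w ≠ 0 := by
    by_contra h
    push_neg at h
    exact hu (hq u h)
  set p := polar q u w with hp
  refine ⟨((c - q w) / p) • u + w, ?_⟩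
  have hpolar : q (((c - q w) / p) • u + w)
      = q (((c - q w) / p) • u) + q w + polar q (((c - q w) / p) • u) w := by
    simp [QuadraticMap.polar]
    try ring
  rw [hpolar, QuadraticMap.map_smul, QuadraticMap.polar_smul_left, hqu, ← hp]
  field_simp
  rw [smul_zero, zero_add, smul_eq_mul, div_mul_cancel₀ _ hw]; ring

end Aux

theorem round_iff_HSet_subset_GSet
    (F : Type*) [Field F] (hF : (2 : F) ≠ 0)
    {V : Type*} [AddCommGroup V] [Module F V] [FiniteDimensional F V]
    (q : QuadraticForm F V) (hq : NondegQF F q) (hpos : 0 < Module.finrank F V)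
    (hone : (1 : F) ∈ DSet F q) :
    IsRound F q ↔ HSet F q ⊆ GSet F q := by
  obtain ⟨-, w₁, hw₁⟩ := hone
  constructor
  · -- Round ⇒ H ⊆ G
    intro hround a ha
    obtain ⟨ha0, hani⟩ := ha
    rw [QuadraticMap.Anisotropic] at hani
    push_neg at hani
    obtain ⟨x, hx0, hxne⟩ := hani
    have hsum : q x.1 + -a * q x.2 = 0 := by
      simpa [QuadraticMap.prod_apply, QuadraticMap.smul_apply] using hx0
    have hx1 : q x.1 = a * q x.2 := by linear_combination hsum
    by_cases h2 : q x.2 = 0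
    · -- q is isotropic, hence universal, hence D = F×; and D = G
      have hiso : ∃ u : V, u ≠ 0 ∧ q u = 0 := by
        rcases eq_or_ne x.2 0 with h | h
        · refine ⟨x.1, ?_, by rw [hx1, h2, mul_zero]⟩
          intro hc
          exact hxne (Prod.ext hc h)
        · exact ⟨x.2, h, h2⟩
      obtain ⟨u, hu, hqu⟩ := hiso
      obtain ⟨w, hw⟩ := universal_of_isotropic_s3 hq hu hqu a
      have : a ∈ DSet F q := ⟨ha0, w, hw⟩
      rwa [hround] at this
    · -- both q x.1, q x.2 nonzero values
      have h1 : q x.1 ≠ 0 := by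
        rw [hx1]
        exact mul_ne_zero ha0 h2
      have hd1 : q x.1 ∈ GSet F q := by
        rw [← hround]; exact ⟨h1, x.1, rfl⟩
      have hd2 : q x.2 ∈ GSet F q := by
        rw [← hround]; exact ⟨h2, x.2, rfl⟩
      have : a = q x.1 * (q x.2)⁻¹ := by
        field_simp [hx1]
        exact hx1.symm
      rw [this]
      exact GSet_mul hd1 (GSet_inv hd2)
  · -- H ⊆ G ⇒ Round
    intro hsub
    ext a
    constructor
    · intro ⟨ha0, v, hv⟩
      apply hsub
      refine ⟨ha0, ?_⟩
      intro hani
      have hval : (QuadraticMap.prod q ((-a) • q)) (v, w₁) = 0 := by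
        simp [QuadraticMap.prod_apply, QuadraticMap.smul_apply, hv, hw₁]
      have := hani _ hval
      have hv0 : v ≠ 0 := by
        intro hc
        rw [hc, map_zero] at hv
        exact ha0 hv.symm
      exact hv0 (congrArg Prod.fst this)
    · intro ⟨ha0, hequiv⟩
      obtain ⟨f⟩ := hequiv
      refine ⟨ha0, f w₁, ?_⟩
      rw [f.map_app, QuadraticMap.smul_apply, hw₁, smul_eq_mul, mul_one]
end

section
/- Let F be a field of characteristic not 2 and q an odd-dimensional isotropic nondegenerate quadratic form over F. Then q is round if and only if F is quadratically closed (every element of F× is a square). -/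
open QuadraticMap

theorem odd_isotropic_round_iff_quadratically_closed
    (F : Type*) [Field F] (hF : (2 : F) ≠ 0)
    {V : Type*} [AddCommGroup V] [Module F V] [FiniteDimensional F V]
    (q : QuadraticForm F V) (hq : NondegQF F q)
    (hodd : Odd (Module.finrank F V)) (hiso : ¬ q.Anisotropic) :
    IsRound F q ↔ ∀ a : F, a ≠ 0 → IsSquare a := by
  classical
  have key : ∀ x y : V, q (x + y) = q x + q y + polar q x y := by
    intro x y; simp only [polar]; ring
  -- isotropic nondegenerate forms are universal
  have huniv : ∀ a : F, a ≠ 0 → ∃ v : V, q v = a := by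
    intro a ha
    rw [QuadraticMap.Anisotropic] at hiso
    push_neg at hiso
    obtain ⟨v, hv0, hvne⟩ := hiso
    obtain ⟨w, hw⟩ : ∃ w, polar q v w ≠ 0 := by
      by_contra h
      push_neg at h
      exact hvne (hq v h)
    set p := polar q v w with hp
    set w' := w + (-(q w / p)) • v with hw'
    have hqw' : q w' = 0 := by
      rw [hw', key, QuadraticMap.map_smul, polar_smul_right, hv0, polar_comm (⇑q) w v, ← hp]
      rw [smul_zero, smul_eq_mul, add_zero, neg_mul, div_mul_cancel₀ _ hw, add_neg_cancel]
    have hpol' : polar q v w' = p := by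
      rw [hw', polar_add_right, polar_smul_right, polar_self, hv0]
      simp
      exact hp.symm
    refine ⟨(a / p) • v + w', ?_⟩
    rw [key, QuadraticMap.map_smul, polar_smul_left, hv0, hqw', hpol']
    simp only [smul_zero, smul_eq_mul, mul_zero, zero_add]
    exact div_mul_cancel₀ _ hw
  -- similarity factors are squares (odd dimension)
  have hGsq : ∀ a : F, a ≠ 0 → QuadraticMap.Equivalent (a • q) q → IsSquare a := by
    intro a ha he
    obtain ⟨f⟩ := he
    set b := Module.finBasis F V with hb
    have hsep : q.polarBilin.SeparatingLeft := by
      intro x hx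
      exact hq x (fun w => by simpa using hx w)
    have hPdet : (LinearMap.toMatrix₂ b b q.polarBilin).det ≠ 0 :=
      (LinearMap.separatingLeft_iff_det_ne_zero b).mp hsep
    have hfx : ∀ m, q (f.toLinearEquiv m) = a * q m := by
      intro m
      simpa using f.map_app' m
    have hcomp : q.polarBilin.compl₁₂ (f.toLinearEquiv : V →ₗ[F] V) (f.toLinearEquiv : V →ₗ[F] V)
        = a • q.polarBilin := by
      ext x y
      simp only [LinearMap.compl₁₂_apply, LinearMap.smul_apply, polarBilin_apply_apply,
        smul_eq_mul, LinearEquiv.coe_coe]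
      simp only [polar]
      rw [← map_add, hfx, hfx, hfx]
      ring
    have hmat := congrArg Matrix.det (congrArg (LinearMap.toMatrix₂ b b) hcomp)
    rw [LinearMap.toMatrix₂_compl₁₂ b b b b, _root_.map_smul, Matrix.det_mul, Matrix.det_mul,
      Matrix.det_transpose, Matrix.det_smul] at hmat
    set d := (LinearMap.toMatrix b b (f.toLinearEquiv : V →ₗ[F] V)).det with hd
    set P := (LinearMap.toMatrix₂ b b q.polarBilin).det with hP
    obtain ⟨k, hk⟩ := hodd
    have hcard : Fintype.card (Fin (Module.finrank F V)) = 2 * k + 1 := by simp [hk]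
    rw [hcard] at hmat
    have hdd : d * d = a ^ (2 * k + 1) := by
      refine mul_right_cancel₀ hPdet ?_
      linear_combination hmat
    have hak : a ^ k ≠ 0 := pow_ne_zero _ ha
    refine ⟨d / a ^ k, ?_⟩
    field_simp
    rw [_root_.sq d, hdd]; ring
  -- squares are similarity factors
  have hsqG : ∀ a : F, a ≠ 0 → IsSquare a → QuadraticMap.Equivalent (a • q) q := by
    rintro a ha ⟨r, rfl⟩
    have hr : r ≠ 0 := by
      rintro rfl; simp at ha
    refine ⟨{ toLinearEquiv := LinearEquiv.smulOfNeZero F V r hr, map_app' := fun m => ?_ }⟩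
    show q (r • m) = ((r * r) • q) m
    rw [QuadraticMap.map_smul, QuadraticMap.smul_apply]
  constructor
  · intro hround a ha
    have haD : a ∈ DSet F q := ⟨ha, huniv a ha⟩
    have hround' : DSet F q = GSet F q := hround
    rw [hround'] at haD
    exact hGsq a haD.1 haD.2
  · intro hsq
    show DSet F q = GSet F q
    ext a
    simp only [DSet, GSet, Set.mem_setOf_eq]
    exact ⟨fun ⟨ha, _⟩ => ⟨ha, hsqG a ha (hsq a ha)⟩, fun ⟨ha, _⟩ => ⟨ha, huniv a ha⟩⟩
end

section
/- Let F be a field of characteristic not 2 and q an odd-dimensional round nondegenerate quadratic form over F. Then q is isometric to (2r+1) × ⟨1⟩ for some nonnegative integer r, i.e. q is isometric to the sum-of-squares form of its dimension. -/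
open QuadraticMap

theorem odd_round_is_sum_of_squares_form
    (F : Type*) [Field F] (hF : (2 : F) ≠ 0)
    {V : Type*} [AddCommGroup V] [Module F V] [FiniteDimensional F V]
    (q : QuadraticForm F V) (hq : NondegQF F q)
    (hodd : Odd (Module.finrank F V)) (hround : IsRound F q) :
    ∃ r : ℕ, Module.finrank F V = 2 * r + 1 ∧
      QuadraticMap.Equivalent q
        (QuadraticMap.weightedSumSquares F (fun _ : Fin (2 * r + 1) => (1 : F))) := by

  classical
  haveI : Invertible (2 : F) := invertibleOfNonzero hF
  obtain ⟨r, hr⟩ := hodd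
  -- the associated bilinear form is separating
  have hsep : (QuadraticMap.associated (R := F) q).SeparatingLeft := by
    intro v hv
    apply hq v
    intro w
    have h := hv w
    rw [QuadraticMap.associated_apply, Module.End.smul_def,
      half_moduleEnd_apply_eq_half_smul, smul_eq_mul] at h
    have h2 : (⅟(2:F)) ≠ 0 := Invertible.ne_zero _
    have := (mul_eq_zero.mp h).resolve_left h2
    show q (v + w) - q v - q w = 0
    exact this
  set n := Module.finrank F V with hn
  obtain ⟨wu, ⟨f₀⟩⟩ := q.equivalent_weightedSumSquares_units_of_nondegenerate' hsep
  set w : Fin n → F := fun i => (wu i : F) with hw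
  have hWcoe : weightedSumSquares F wu = weightedSumSquares F w := by
    ext v
    simp [weightedSumSquares_apply, hw, Units.smul_def]
    rfl
  set W : QuadraticForm F (Fin n → F) := weightedSumSquares F w with hWdef
  have f : q.IsometryEquiv W := hWcoe ▸ f₀
  have hWsingle : ∀ (i : Fin n) (c : F), W (Pi.single i c) = w i * (c * c) := by
    intro i c
    rw [hWdef, weightedSumSquares_apply, Finset.sum_eq_single i]
    · simp
    · intro b _ hb
      simp [Pi.single_eq_of_ne hb]
    · intro h; exact absurd (Finset.mem_univ i) h
  have hD : ∀ i, w i ∈ DSet F q := by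
    intro i
    refine ⟨(wu i).ne_zero, f.symm (Pi.single i 1), ?_⟩
    rw [f.symm.map_app]
    simpa using hWsingle i 1
  have hmat : W.toMatrix' = Matrix.diagonal w := by
    ext i j
    rw [QuadraticForm.toMatrix', LinearMap.toMatrix₂'_apply,
      QuadraticMap.associated_apply, Module.End.smul_def, half_moduleEnd_apply_eq_half_smul]
    by_cases hij : i = j
    · subst hij
      have hsum : (Pi.single i 1 : Fin n → F) + (Pi.single i 1 : Fin n → F) = (Pi.single i 2 : Fin n → F) := by
        rw [← Pi.single_add]; norm_num
      rw [hsum, hWsingle, hWsingle, Matrix.diagonal_apply_eq, smul_eq_mul, invOf_eq_inv]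
      field_simp
      ring
    · rw [Matrix.diagonal_apply_ne _ hij]
      have hs : W ((Pi.single i 1 : Fin n → F) + (Pi.single j 1 : Fin n → F)) = w i + w j := by
        rw [hWdef, weightedSumSquares_apply]
        have hterm : ∀ k : Fin n,
            w k • (((Pi.single i 1 : Fin n → F) + (Pi.single j 1 : Fin n → F)) k *
              ((Pi.single i 1 : Fin n → F) + (Pi.single j 1 : Fin n → F)) k)
            = w k • (Pi.single i 1 : Fin n → F) k + w k • (Pi.single j 1 : Fin n → F) k := by
          intro k
          have hk : ((Pi.single i 1 : Fin n → F) + (Pi.single j 1 : Fin n → F)) k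
              = (Pi.single i 1 : Fin n → F) k + (Pi.single j 1 : Fin n → F) k := rfl
          rw [hk]
          rcases eq_or_ne k i with rfl | hki
          · rw [Pi.single_eq_same, Pi.single_eq_of_ne hij]
            simp
          · rcases eq_or_ne k j with rfl | hkj
            · rw [Pi.single_eq_same, Pi.single_eq_of_ne hki]
              simp
            · rw [Pi.single_eq_of_ne hki, Pi.single_eq_of_ne hkj]
              simp
        simp only [hterm]
        have h1 : (∑ k, w k • (Pi.single i 1 : Fin n → F) k) = w i := by
          rw [Finset.sum_eq_single i]
          · simp
          · intro b _ hb
            rw [Pi.single_eq_of_ne hb, smul_zero]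
          · intro hi; exact absurd (Finset.mem_univ _) hi
        have h2 : (∑ k, w k • (Pi.single j 1 : Fin n → F) k) = w j := by
          rw [Finset.sum_eq_single j]
          · simp
          · intro b _ hb
            rw [Pi.single_eq_of_ne hb, smul_zero]
          · intro hi; exact absurd (Finset.mem_univ _) hi
        rw [Finset.sum_add_distrib, h1, h2]
      rw [hs, hWsingle, hWsingle]
      have hz : w i + w j - w i * (1 * 1) - w j * (1 * 1) = 0 := by ring
      rw [hz, smul_zero]
  have hd : W.discr' ≠ 0 := by
    rw [QuadraticForm.discr', hmat, Matrix.det_diagonal]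
    exact Finset.prod_ne_zero_iff.mpr fun i _ => (wu i).ne_zero
  have hsq : ∀ i, ∃ c : F, c ≠ 0 ∧ c * c = w i := by
    intro i
    have hmemG : w i ∈ GSet F q := hround ▸ hD i
    obtain ⟨ha, ⟨g⟩⟩ := hmemG
    have fa : QuadraticMap.IsometryEquiv ((w i) • q) ((w i) • W) :=
      { f.toLinearEquiv with
        map_app' := fun v => by
          have := f.map_app v
          simp only [QuadraticMap.smul_apply] at *
          simpa using congrArg (fun x => w i • x) this }
    have h : QuadraticMap.IsometryEquiv ((w i) • W) W := (fa.symm.trans g).trans f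
    have hcomp : W.comp (h.toLinearEquiv : (Fin n → F) →ₗ[F] (Fin n → F)) = (w i) • W := by
      ext v
      simpa [QuadraticMap.comp_apply] using h.map_app v
    have hdet := congrArg QuadraticForm.discr' hcomp
    rw [QuadraticForm.discr'_comp, QuadraticForm.discr'_smul] at hdet
    set m := (LinearMap.toMatrix' ((h.toLinearEquiv : (Fin n → F) →ₗ[F] (Fin n → F)))).det with hm
    have key : m * m = (w i) ^ (2 * r + 1) := by
      have := mul_right_cancel₀ hd hdet
      rwa [Fintype.card_fin, hr] at this
    have hwne : w i ≠ 0 := (wu i).ne_zero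
    have hprne : (w i) ^ r * (w i) ^ r ≠ 0 := mul_ne_zero (pow_ne_zero _ hwne) (pow_ne_zero _ hwne)
    refine ⟨m / (w i) ^ r, ?_, ?_⟩
    · intro h0
      have hm0 : m = 0 :=
        (div_eq_zero_iff.mp h0).resolve_right (pow_ne_zero _ hwne)
      rw [hm0, zero_mul] at key
      exact pow_ne_zero _ hwne key.symm
    · rw [div_mul_div_comm, key]
      have hpow : (w i) ^ (2 * r + 1) = ((w i) ^ r * (w i) ^ r) * w i := by ring
      rw [hpow, mul_div_assoc, mul_comm ((w i) ^ r * (w i) ^ r), div_mul_cancel₀ _ hprne]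
  choose c hc0 hc using hsq
  let e : (Fin n → F) ≃ₗ[F] (Fin n → F) :=
    LinearEquiv.piCongrRight fun i => LinearEquiv.smulOfNeZero F F (c i) (hc0 i)
  have iso : QuadraticMap.IsometryEquiv W (weightedSumSquares F (fun _ : Fin n => (1 : F))) := by
    refine ⟨e, fun v => ?_⟩
    show weightedSumSquares F (fun _ : Fin n => (1 : F)) (e v) = W v
    rw [hWdef, weightedSumSquares_apply, weightedSumSquares_apply]
    refine Finset.sum_congr rfl fun i _ => ?_
    have he : e v i = c i * v i := by
      simp [e, LinearEquiv.piCongrRight, smul_eq_mul]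
    rw [he, ← hc i]
    simp [smul_eq_mul]
    ring
  have final : QuadraticMap.Equivalent q (weightedSumSquares F (fun _ : Fin n => (1 : F))) :=
    ⟨f.trans iso⟩
  exact ⟨r, hr, hr ▸ final⟩
end

section
/- Let F be a field of characteristic not 2. The quadratic form (2n+1) × ⟨1⟩ is round over F for every nonnegative integer n if and only if F is Pythagorean (every sum of two squares in F is a square). -/
open QuadraticMap

/-- The matrix of the sum-of-squares form is the identity. -/
theorem aux_toMatrix (F : Type*) [Field F] [Invertible (2:F)] (m : ℕ) :
    QuadraticForm.toMatrix' (weightedSumSquares F (fun _ : Fin m => (1:F))) = 1 := by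
  ext i j
  rw [QuadraticForm.toMatrix', LinearMap.toMatrix₂'_apply, QuadraticMap.associated_apply,
    weightedSumSquares_apply, weightedSumSquares_apply, weightedSumSquares_apply]
  have hs : ∀ k : Fin m, ((Pi.single i 1 + Pi.single j 1 : Fin m → F) k
        * (Pi.single i 1 + Pi.single j 1 : Fin m → F) k)
      = (if k = i then (1:F) else 0) + (if k = j then 1 else 0)
        + (if k = i then (1:F) else 0) * (if k = j then 1 else 0) * 2 := by
    intro k
    simp only [Pi.add_apply, Pi.single_apply]
    split_ifs <;> ring
  simp only [smul_eq_mul, one_mul, hs, Finset.sum_add_distrib, Pi.single_apply,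
    Finset.sum_ite_eq', Finset.mem_univ, if_true, mul_ite, ite_mul, zero_mul, mul_zero,
    mul_one, one_mul]
  rcases eq_or_ne i j with rfl | hij
  · simp [Matrix.one_apply]
    norm_num
  · simp [Matrix.one_apply, hij, Ne.symm hij]

theorem aux_discr (F : Type*) [Field F] [Invertible (2:F)] (m : ℕ) :
    QuadraticForm.discr' (weightedSumSquares F (fun _ : Fin m => (1:F))) = 1 := by
  rw [QuadraticForm.discr', aux_toMatrix, Matrix.det_one]

/-- Scaling by a nonzero square gives an equivalent form. -/
theorem aux_smul_equiv (F : Type*) [Field F] (m : ℕ) (d : F) (hd : d ≠ 0) :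
    QuadraticMap.Equivalent ((d * d) • weightedSumSquares F (fun _ : Fin m => (1:F)))
      (weightedSumSquares F (fun _ : Fin m => (1:F))) := by
  refine ⟨{ LinearEquiv.smulOfNeZero F (Fin m → F) d hd with map_app' := ?_ }⟩
  intro v
  show weightedSumSquares F _ (d • v) = _
  rw [QuadraticMap.smul_apply, weightedSumSquares_apply, weightedSumSquares_apply,
    smul_eq_mul, Finset.mul_sum]
  refine Finset.sum_congr rfl fun i _ => ?_
  simp only [Pi.smul_apply, smul_eq_mul, one_smul]
  ring

theorem aux_sq {F : Type*} [Field F] {c d : F} (hc : c ≠ 0) (h3 : c ^ 3 = d * d) :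
    IsSquare c := by
  refine ⟨d * c⁻¹, ?_⟩
  field_simp
  linear_combination (1 - c) * h3 + c * h3

/-- In a Pythagorean field, any finite sum of squares is a square. -/
theorem aux_sum_sq {F : Type*} [Field F] (pyth : ∀ a b : F, IsSquare (a ^ 2 + b ^ 2))
    {ι : Type*} (s : Finset ι) (f : ι → F) : IsSquare (∑ i ∈ s, f i * f i) := by
  classical
  induction s using Finset.induction_on with
  | empty => exact ⟨0, by simp⟩
  | insert _ _ h ih =>
    rw [Finset.sum_insert h]
    obtain ⟨r, hr⟩ := ih
    obtain ⟨c, hc⟩ := pyth _ r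
    exact ⟨c, by rw [← hc, hr]; ring⟩

theorem odd_sum_of_squares_round_iff_pythagorean
    (F : Type*) [Field F] (hF : (2 : F) ≠ 0) :
    (∀ n : ℕ, IsRound F
        (QuadraticMap.weightedSumSquares F (fun _ : Fin (2 * n + 1) => (1 : F)))) ↔
      ∀ a b : F, IsSquare (a ^ 2 + b ^ 2) := by
  haveI : Invertible (2 : F) := invertibleOfNonzero hF
  constructor
  · intro hround a b
    rcases eq_or_ne (a ^ 2 + b ^ 2) 0 with h0 | hc
    · rw [h0]; exact ⟨0, by ring⟩
    set c := a ^ 2 + b ^ 2 with hcdef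
    set q := weightedSumSquares F (fun _ : Fin (2 * 1 + 1) => (1 : F)) with hq
    have hmem : c ∈ DSet F q := by
      refine ⟨hc, ![a, b, 0], ?_⟩
      rw [hq, weightedSumSquares_apply]
      show (1:F) • _ + ((1:F) • _ + ((1:F) • _ + 0)) = c
      simp [hcdef]
      ring
    rw [hround 1] at hmem
    obtain ⟨-, ⟨f⟩⟩ := hmem
    have hcomp : c • q = q.comp (f.toLinearEquiv : (Fin (2*1+1) → F) →ₗ[F] (Fin (2*1+1) → F)) := by
      ext v
      rw [QuadraticMap.comp_apply]
      exact (f.map_app v).symm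
    have hdiscr := congrArg QuadraticForm.discr' hcomp
    rw [QuadraticForm.discr'_smul, QuadraticForm.discr'_comp, aux_discr] at hdiscr
    set d := (LinearMap.toMatrix'
      (f.toLinearEquiv : (Fin (2*1+1) → F) →ₗ[F] (Fin (2*1+1) → F))).det with hd
    have h3 : c ^ 3 = d * d := by
      have hcard : Fintype.card (Fin (2 * 1 + 1)) = 3 := by simp
      rw [hcard] at hdiscr
      linear_combination hdiscr
    exact aux_sq hc h3
  · intro pyth n
    set m := 2 * n + 1 with hm
    set q := weightedSumSquares F (fun _ : Fin m => (1 : F)) with hq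
    have hqval : ∀ v : Fin m → F, q v = ∑ i, v i * v i := by
      intro v
      rw [hq, weightedSumSquares_apply]
      exact Finset.sum_congr rfl fun i _ => one_smul _ _
    have e0 : Fin m := ⟨0, by omega⟩
    ext x
    constructor
    · rintro ⟨hx, v, hv⟩
      obtain ⟨e, he⟩ : IsSquare x := by
        rw [← hv, hqval]
        exact aux_sum_sq pyth _ _
      have he0 : e ≠ 0 := by rintro rfl; exact hx (by simp [he])
      exact ⟨hx, by rw [he]; exact aux_smul_equiv F m e he0⟩
    · rintro ⟨hx, ⟨f⟩⟩
      have h1 : q (Pi.single e0 1) = 1 := by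
        rw [hqval]
        simp [Pi.single_apply, Finset.sum_ite_eq']
      refine ⟨hx, f (Pi.single e0 1), ?_⟩
      calc q (f (Pi.single e0 1)) = (x • q) (Pi.single e0 1) := f.map_app _
        _ = x := by rw [QuadraticMap.smul_apply, h1, smul_eq_mul, mul_one]
end

section
/- Let F be a field of characteristic not 2 and q an anisotropic nondegenerate quadratic form over F. Then q remains anisotropic over the Laurent series field F((x)). -/
open QuadraticMap

/-- Base change (scalar extension) of a quadratic form on `Fin n → F` along `F → K`,
given by extending the Gram matrix. -/
noncomputable def baseChangeFin {F : Type*} [Field F] [Invertible (2 : F)]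
    (K : Type*) [Field K] [Algebra F K] {n : ℕ} (q : QuadraticForm F (Fin n → F)) :
    QuadraticForm K (Fin n → K) :=
  ((QuadraticForm.toMatrix' q).map (algebraMap F K)).toQuadraticForm'

/-- If two Laurent series have all coefficients below `d` vanishing, then the coefficient of
their product at `d + d` is the product of their coefficients at `d`. -/
private lemma laurent_mul_coeff_min {F : Type*} [Field F] (s t : LaurentSeries F) (d : ℤ)
    (hs : ∀ k < d, s.coeff k = 0) (ht : ∀ k < d, t.coeff k = 0) :
    (s * t).coeff (d + d) = s.coeff d * t.coeff d := by
  rw [HahnSeries.coeff_mul]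
  refine Finset.sum_eq_single (d, d) ?_ ?_
  · rintro ⟨k, l⟩ hmem hne
    rw [Finset.mem_addAntidiagonal] at hmem
    obtain ⟨hk, hl, hkl⟩ := hmem
    exfalso
    apply hne
    have hk' : d ≤ k := le_of_not_gt fun h => hk (hs k h)
    have hl' : d ≤ l := le_of_not_gt fun h => hl (ht l h)
    have h1 : k = d := by omega
    have h2 : l = d := by omega
    simp [h1, h2]
  · intro hne
    rw [Finset.mem_addAntidiagonal] at hne
    push_neg at hne
    by_cases h1 : s.coeff d = 0
    · rw [h1, zero_mul]
    by_cases h2 : t.coeff d = 0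
    · rw [h2, mul_zero]
    exact absurd rfl (hne h1 h2)

/-- The algebra map from `F` to `F((x))` is given by `single 0`. -/
private lemma laurent_algebraMap_eq_single {F : Type*} [Field F] (r : F) :
    algebraMap F (LaurentSeries F) r = HahnSeries.single (0 : ℤ) r := by
  rw [HahnSeries.algebraMap_apply', PowerSeries.algebraMap_apply, Algebra.algebraMap_self,
    RingHom.id_apply, HahnSeries.ofPowerSeries_C, HahnSeries.C_apply]

theorem anisotropic_baseChange_laurentSeries
    (F : Type*) [Field F] [Invertible (2 : F)]
    {n : ℕ} (q : QuadraticForm F (Fin n → F)) (hq : NondegQF F q)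
    (han : q.Anisotropic) :
    (baseChangeFin (LaurentSeries F) q).Anisotropic := by
  intro v hv
  by_contra hvne
  obtain ⟨i0, hi0⟩ : ∃ i, v i ≠ 0 := by
    by_contra h; push_neg at h; exact hvne (funext h)
  classical
  set M := QuadraticForm.toMatrix' q with hM
  set S : Finset (Fin n) := Finset.univ.filter (fun i => v i ≠ 0) with hS
  have hSne : S.Nonempty := ⟨i0, Finset.mem_filter.mpr ⟨Finset.mem_univ _, hi0⟩⟩
  have hTne : (S.image (fun i => (v i).order)).Nonempty := hSne.image _
  set d := (S.image fun i => (v i).order).min' hTne with hd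
  have hlow : ∀ i, ∀ k < d, (v i).coeff k = 0 := by
    intro i k hk
    by_cases hvi : v i = 0
    · simp [hvi]
    · exact HahnSeries.coeff_eq_zero_of_lt_order (lt_of_lt_of_le hk
        (Finset.min'_le _ _ (Finset.mem_image.mpr
          ⟨i, Finset.mem_filter.mpr ⟨Finset.mem_univ _, hvi⟩, rfl⟩)))
  obtain ⟨j, hjS, hjd⟩ := Finset.mem_image.mp ((S.image fun i => (v i).order).min'_mem hTne)
  have hvj : v j ≠ 0 := (Finset.mem_filter.mp hjS).2
  set a : Fin n → F := fun i => (v i).coeff d with ha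
  have haj : a j ≠ 0 := by
    have := HahnSeries.coeff_order_eq_zero.not.mpr hvj
    rwa [hjd] at this
  refine haj (congrFun (han a ?_) j)
  have hexp : (baseChangeFin (LaurentSeries F) q) v
      = ∑ i, ∑ k, v i * (v k * algebraMap F (LaurentSeries F) (M i k)) := by
    simp only [baseChangeFin, Matrix.toQuadraticForm',
      LinearMap.BilinMap.toQuadraticMap_apply, Matrix.toLinearMap₂'_apply]
    simp [smul_eq_mul, Matrix.map_apply]
    rfl
  have hterm : ∀ i k : Fin n,
      (v i * (v k * algebraMap F (LaurentSeries F) (M i k))).coeff (d + d)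
      = a i * a k * M i k := by
    intro i k
    rw [← mul_assoc, laurent_algebraMap_eq_single, HahnSeries.coeff_mul_single_zero,
      laurent_mul_coeff_min (v i) (v k) d (hlow i) (hlow k)]
  have hc : ((baseChangeFin (LaurentSeries F) q) v).coeff (d + d)
      = ∑ i, ∑ k, a i * a k * M i k := by
    rw [hexp]
    rw [show ((∑ i, ∑ k, v i * (v k * algebraMap F (LaurentSeries F) (M i k))).coeff (d + d))
        = HahnSeries.coeff.addMonoidHom (d + d)
          (∑ i, ∑ k, v i * (v k * algebraMap F (LaurentSeries F) (M i k))) from rfl, map_sum]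
    refine Finset.sum_congr rfl fun i _ => ?_
    rw [map_sum]
    exact Finset.sum_congr rfl fun k _ => hterm i k
  have hzero : ∑ i, ∑ k, a i * a k * M i k = 0 := by
    rw [← hc, hv, HahnSeries.coeff_zero]
  have hqa : q a = ∑ i, ∑ k, a i * a k * M i k := by
    conv_lhs => rw [← QuadraticMap.toQuadraticMap_associated F q]
    rw [LinearMap.BilinMap.toQuadraticMap_apply]
    have h : Matrix.toLinearMap₂' F M = QuadraticMap.associatedHom F q := by
      rw [hM]
      exact Matrix.toLinearMap₂'_toMatrix' _
    rw [← h, Matrix.toLinearMap₂'_apply]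
    exact Finset.sum_congr rfl fun i _ => Finset.sum_congr rfl fun k _ => by
      rw [smul_eq_mul, smul_eq_mul, mul_assoc]
  rw [hqa, hzero]
end
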